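/- Let p ≥ 5 be a prime, n ≥ 8p² an integer, S = {±(p² + (a² mod p)p + a) : 0 ≤ a ≤ (p−1)/2} ⊆ ℤ_n, and S₁ = S ∪ {1, −1}. Then the Cayley graph Cay(ℤ_n, S₁) contains no triangle and no subgraph isomorphic to K_{2,4}. -/

import Mathlib

/-- `s_a = p² + (a² mod p)·p + a`, as an integer. -/
def sVal (p a : ℕ) : ℤ := (p : ℤ) ^ 2 + ((a ^ 2 % p : ℕ) : ℤ) * p + a

/-- The set `S = S⁺ ∪ (−S⁺)` where `S⁺ = {s_a : 0 ≤ a ≤ (p−1)/2}`. -/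
def sSet (p : ℕ) : Finset ℤ :=
  (Finset.range ((p - 1) / 2 + 1)).image (sVal p) ∪
    (Finset.range ((p - 1) / 2 + 1)).image fun a => -sVal p a

/-- `H` has a (not necessarily induced) subgraph copy in `G`: an injective
graph homomorphism from `H` to `G`. -/
def hasSubgraphCopy {W V : Type*} (H : SimpleGraph W) (G : SimpleGraph V) : Prop :=
  ∃ f : W → V, Function.Injective f ∧ ∀ ⦃a b⦄, H.Adj a b → G.Adj (f a) (f b)


/-- membership predicate for the integer connection set -/
def inT (p : ℕ) (t : ℤ) : Prop :=
  t = 1 ∨ t = -1 ∨ ∃ a, a ≤ (p - 1) / 2 ∧ (t = sVal p a ∨ t = -sVal p a)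

lemma mval_facts (p : ℕ) (hp5 : 5 ≤ p) (a : ℕ) :
    0 ≤ ((a ^ 2 % p : ℕ) : ℤ) ∧ ((a ^ 2 % p : ℕ) : ℤ) ≤ (p : ℤ) - 1 ∧
      (p : ℤ) ∣ (a : ℤ) ^ 2 - ((a ^ 2 % p : ℕ) : ℤ) := by
  have hp0 : 0 < p := by omega
  have h1 : ((a ^ 2 % p : ℕ) : ℤ) = ((a : ℤ) ^ 2) % p := by push_cast; ring
  refine ⟨by positivity, ?_, ?_⟩
  · have h2 : a ^ 2 % p < p := Nat.mod_lt _ hp0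
    have h3 : ((a ^ 2 % p : ℕ) : ℤ) < (p : ℤ) := by exact_mod_cast h2
    omega
  · rw [h1]
    exact ⟨(a : ℤ) ^ 2 / p, by rw [Int.emod_def]; ring⟩

lemma sval_close (p : ℕ) (hp : p.Prime) (hp5 : 5 ≤ p) {a b : ℕ}
    (ha : a ≤ (p - 1) / 2) (hb : b ≤ (p - 1) / 2)
    (h : |sVal p a - sVal p b| ≤ 2) : a = b := by
  obtain ⟨ma0, ma1, maD⟩ := mval_facts p hp5 a
  obtain ⟨mb0, mb1, mbD⟩ := mval_facts p hp5 b
  set MA := ((a ^ 2 % p : ℕ) : ℤ) with hMA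
  set MB := ((b ^ 2 % p : ℕ) : ℤ) with hMB
  have hp0 : (0 : ℤ) < p := by exact_mod_cast (by omega : 0 < p)
  have hp5' : (5 : ℤ) ≤ p := by exact_mod_cast hp5
  have haZ : (a : ℤ) ≤ (((p - 1) / 2 : ℕ) : ℤ) := by exact_mod_cast ha
  have hbZ : (b : ℤ) ≤ (((p - 1) / 2 : ℕ) : ℤ) := by exact_mod_cast hb
  have hKZ : 2 * (((p - 1) / 2 : ℕ) : ℤ) ≤ (p : ℤ) - 1 := by omega
  have ha0 : (0 : ℤ) ≤ a := Int.natCast_nonneg a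
  have hb0 : (0 : ℤ) ≤ b := Int.natCast_nonneg b
  obtain ⟨h1, h2⟩ := abs_le.mp h
  have hdiff : sVal p a - sVal p b = (MA - MB) * p + ((a : ℤ) - b) := by
    unfold sVal; ring
  have hM : MA = MB := by
    rcases lt_trichotomy MA MB with h' | h' | h'
    · exfalso
      have : (MA - MB) * p ≤ (-1) * p :=
        mul_le_mul_of_nonneg_right (by omega) hp0.le
      linarith
    · exact h'
    · exfalso
      have : (1 : ℤ) * p ≤ (MA - MB) * p :=
        mul_le_mul_of_nonneg_right (by omega) hp0.le
      linarith
  have hab : -2 ≤ (a : ℤ) - b ∧ (a : ℤ) - b ≤ 2 := by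
    rw [hdiff, hM] at h1 h2; constructor <;> linarith
  have hd : (p : ℤ) ∣ ((a : ℤ) - b) * ((a : ℤ) + b) := by
    have h' := dvd_sub maD mbD
    rw [hM] at h'
    have he : ((a : ℤ) - b) * ((a : ℤ) + b) = ((a : ℤ) ^ 2 - MB) - ((b : ℤ) ^ 2 - MB) := by
      ring
    rw [he]; exact h'
  have hprime : Prime ((p : ℕ) : ℤ) := Nat.prime_iff_prime_int.mp hp
  rcases hprime.dvd_mul.mp hd with hc | hc
  · have : (a : ℤ) - b = 0 :=
      Int.eq_zero_of_abs_lt_dvd hc (abs_lt.mpr ⟨by linarith [hab.1], by linarith [hab.2]⟩)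
    omega
  · have : (a : ℤ) + b = 0 :=
      Int.eq_zero_of_abs_lt_dvd hc (abs_lt.mpr ⟨by linarith, by linarith⟩)
    omega

lemma sval_A (p : ℕ) (hp : p.Prime) (hp5 : 5 ≤ p) {a b : ℕ}
    (ha : a ≤ (p - 1) / 2) (hb : b ≤ (p - 1) / 2) :
    sVal p a = sVal p b ∨ sVal p a + 3 ≤ sVal p b ∨ sVal p b + 3 ≤ sVal p a := by
  by_cases he : a = b
  · exact Or.inl (by rw [he])
  · right
    by_contra hcon
    push_neg at hcon
    exact he (sval_close p hp hp5 ha hb (abs_le.mpr ⟨by omega, by omega⟩))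

lemma sval_bounds (p : ℕ) (hp5 : 5 ≤ p) {a : ℕ} (ha : a ≤ (p - 1) / 2) :
    (p : ℤ) ^ 2 ≤ sVal p a ∧ sVal p a ≤ 2 * (p : ℤ) ^ 2 - 3 := by
  obtain ⟨m0, m1, -⟩ := mval_facts p hp5 a
  have hp5' : (5 : ℤ) ≤ p := by exact_mod_cast hp5
  have haZ : (a : ℤ) ≤ (((p - 1) / 2 : ℕ) : ℤ) := by exact_mod_cast ha
  have hKZ : 2 * (((p - 1) / 2 : ℕ) : ℤ) ≤ (p : ℤ) - 1 := by omega
  have ha0 : (0 : ℤ) ≤ a := Int.natCast_nonneg a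
  have hmul : ((a ^ 2 % p : ℕ) : ℤ) * p ≤ ((p : ℤ) - 1) * p :=
    mul_le_mul_of_nonneg_right m1 (by linarith)
  have hmul0 : (0 : ℤ) ≤ ((a ^ 2 % p : ℕ) : ℤ) * p := mul_nonneg m0 (by linarith)
  unfold sVal
  constructor <;> nlinarith

lemma sval_B (p : ℕ) (hp : p.Prime) (hp5 : 5 ≤ p) {a b c d : ℕ}
    (ha : a ≤ (p - 1) / 2) (hb : b ≤ (p - 1) / 2) (hc : c ≤ (p - 1) / 2)
    (hd : d ≤ (p - 1) / 2) (h : sVal p a + sVal p b = sVal p c + sVal p d) :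
    (sVal p a = sVal p c ∧ sVal p b = sVal p d) ∨
      (sVal p a = sVal p d ∧ sVal p b = sVal p c) := by
  suffices hs : (a = c ∧ b = d) ∨ (a = d ∧ b = c) by
    rcases hs with ⟨rfl, rfl⟩ | ⟨rfl, rfl⟩
    · exact Or.inl ⟨rfl, rfl⟩
    · exact Or.inr ⟨rfl, rfl⟩
  obtain ⟨ma0, ma1, maD⟩ := mval_facts p hp5 a
  obtain ⟨mb0, mb1, mbD⟩ := mval_facts p hp5 b
  obtain ⟨mc0, mc1, mcD⟩ := mval_facts p hp5 c
  obtain ⟨md0, md1, mdD⟩ := mval_facts p hp5 d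
  set MA := ((a ^ 2 % p : ℕ) : ℤ)
  set MB := ((b ^ 2 % p : ℕ) : ℤ)
  set MC := ((c ^ 2 % p : ℕ) : ℤ)
  set MD := ((d ^ 2 % p : ℕ) : ℤ)
  have hp0 : (0 : ℤ) < p := by exact_mod_cast (by omega : 0 < p)
  have hp5' : (5 : ℤ) ≤ p := by exact_mod_cast hp5
  have haZ : (a : ℤ) ≤ (((p - 1) / 2 : ℕ) : ℤ) := by exact_mod_cast ha
  have hbZ : (b : ℤ) ≤ (((p - 1) / 2 : ℕ) : ℤ) := by exact_mod_cast hb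
  have hcZ : (c : ℤ) ≤ (((p - 1) / 2 : ℕ) : ℤ) := by exact_mod_cast hc
  have hdZ : (d : ℤ) ≤ (((p - 1) / 2 : ℕ) : ℤ) := by exact_mod_cast hd
  have hKZ : 2 * (((p - 1) / 2 : ℕ) : ℤ) ≤ (p : ℤ) - 1 := by omega
  have ha0 : (0 : ℤ) ≤ a := Int.natCast_nonneg a
  have hb0 : (0 : ℤ) ≤ b := Int.natCast_nonneg b
  have hc0 : (0 : ℤ) ≤ c := Int.natCast_nonneg c
  have hd0 : (0 : ℤ) ≤ d := Int.natCast_nonneg d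
  have heq : (MA + MB - MC - MD) * p + ((a : ℤ) + b - c - d) = 0 := by
    unfold sVal at h; linarith
  have hM : MA + MB = MC + MD := by
    rcases lt_trichotomy (MA + MB) (MC + MD) with h' | h' | h'
    · exfalso
      have : (MA + MB - MC - MD) * p ≤ (-1) * p :=
        mul_le_mul_of_nonneg_right (by omega) hp0.le
      linarith
    · exact h'
    · exfalso
      have : (1 : ℤ) * p ≤ (MA + MB - MC - MD) * p :=
        mul_le_mul_of_nonneg_right (by omega) hp0.le
      linarith
  have hsum : (a : ℤ) + b = (c : ℤ) + d := by
    rw [hM] at heq; linarith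
  have hprime : Prime ((p : ℕ) : ℤ) := Nat.prime_iff_prime_int.mp hp
  have hsq : (p : ℤ) ∣ ((a : ℤ) ^ 2 + b ^ 2) - ((c : ℤ) ^ 2 + d ^ 2) := by
    have h' := dvd_sub (dvd_add maD mbD) (dvd_add mcD mdD)
    have he : ((a : ℤ) ^ 2 + b ^ 2) - ((c : ℤ) ^ 2 + d ^ 2) =
        (((a : ℤ) ^ 2 - MA) + ((b : ℤ) ^ 2 - MB)) -
          (((c : ℤ) ^ 2 - MC) + ((d : ℤ) ^ 2 - MD)) + ((MA + MB) - (MC + MD)) := by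
      ring
    rw [he, hM, sub_self, add_zero]
    exact h'
  have h2ab : (p : ℤ) ∣ 2 * ((a : ℤ) * b - (c : ℤ) * d) := by
    have he : 2 * ((a : ℤ) * b - (c : ℤ) * d) =
        (((a : ℤ) + b) ^ 2 - ((c : ℤ) + d) ^ 2) -
          (((a : ℤ) ^ 2 + b ^ 2) - ((c : ℤ) ^ 2 + d ^ 2)) := by ring
    rw [he, hsum, sub_self, zero_sub]
    exact dvd_neg.mpr hsq
  have hab : (p : ℤ) ∣ (a : ℤ) * b - (c : ℤ) * d := by
    rcases hprime.dvd_mul.mp h2ab with h' | h'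
    · exfalso
      have := Int.le_of_dvd (by norm_num) h'
      linarith
    · exact h'
  have hfact : (p : ℤ) ∣ ((a : ℤ) - c) * ((a : ℤ) - d) := by
    have he : ((a : ℤ) - c) * ((a : ℤ) - d) =
        -((a : ℤ) * b - (c : ℤ) * d) + (a : ℤ) * (((a : ℤ) + b) - ((c : ℤ) + d)) := by
      ring
    rw [he, hsum, sub_self, mul_zero, add_zero]
    exact dvd_neg.mpr hab
  rcases hprime.dvd_mul.mp hfact with h' | h'
  · have : (a : ℤ) - c = 0 :=
      Int.eq_zero_of_abs_lt_dvd h' (abs_lt.mpr ⟨by linarith, by linarith⟩)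
    left; omega
  · have : (a : ℤ) - d = 0 :=
      Int.eq_zero_of_abs_lt_dvd h' (abs_lt.mpr ⟨by linarith, by linarith⟩)
    right; omega

lemma inT_struct (p : ℕ) {t : ℤ} (ht : inT p t) :
    ∃ a, a ≤ (p - 1) / 2 ∧ (t = 1 ∨ t = -1 ∨ t = sVal p a ∨ t = -sVal p a) := by
  rcases ht with h | h | ⟨a, ha, h | h⟩
  · exact ⟨0, Nat.zero_le _, Or.inl h⟩
  · exact ⟨0, Nat.zero_le _, Or.inr (Or.inl h)⟩
  · exact ⟨a, ha, Or.inr (Or.inr (Or.inl h))⟩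
  · exact ⟨a, ha, Or.inr (Or.inr (Or.inr h))⟩

lemma inT_neg (p : ℕ) {t : ℤ} (ht : inT p t) : inT p (-t) := by
  rcases ht with h | h | ⟨a, ha, h | h⟩
  · exact Or.inr (Or.inl (by rw [h]))
  · exact Or.inl (by rw [h]; ring)
  · exact Or.inr (Or.inr ⟨a, ha, Or.inr (by rw [h])⟩)
  · exact Or.inr (Or.inr ⟨a, ha, Or.inl (by rw [h]; ring)⟩)

lemma inT_bound (p : ℕ) (hp5 : 5 ≤ p) {t : ℤ} (ht : inT p t) :
    -(2 * (p : ℤ) ^ 2 - 3) ≤ t ∧ t ≤ 2 * (p : ℤ) ^ 2 - 3 := by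
  have hq : (25 : ℤ) ≤ (p : ℤ) ^ 2 := by
    have : (5 : ℤ) ≤ p := by exact_mod_cast hp5
    nlinarith
  obtain ⟨a, ha, h⟩ := inT_struct p ht
  obtain ⟨h1, h2⟩ := sval_bounds p hp5 ha
  rcases h with rfl | rfl | rfl | rfl <;> constructor <;> linarith

lemma no_triple (p : ℕ) (hp : p.Prime) (hp5 : 5 ≤ p) {t1 t2 t3 : ℤ}
    (h1 : inT p t1) (h2 : inT p t2) (h3 : inT p t3) : t1 + t2 + t3 ≠ 0 := by
  obtain ⟨a1, ha1, h1⟩ := inT_struct p h1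
  obtain ⟨a2, ha2, h2⟩ := inT_struct p h2
  obtain ⟨a3, ha3, h3⟩ := inT_struct p h3
  have hq : (25 : ℤ) ≤ (p : ℤ) ^ 2 := by
    have : (5 : ℤ) ≤ p := by exact_mod_cast hp5
    nlinarith
  obtain ⟨q, hq25, hb1, hb2, hb3, hA12, hA13, hA23⟩ :
      ∃ q : ℤ, 25 ≤ q ∧
        (q ≤ sVal p a1 ∧ sVal p a1 ≤ 2 * q - 3) ∧
        (q ≤ sVal p a2 ∧ sVal p a2 ≤ 2 * q - 3) ∧
        (q ≤ sVal p a3 ∧ sVal p a3 ≤ 2 * q - 3) ∧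
        (sVal p a1 = sVal p a2 ∨ sVal p a1 + 3 ≤ sVal p a2 ∨ sVal p a2 + 3 ≤ sVal p a1) ∧
        (sVal p a1 = sVal p a3 ∨ sVal p a1 + 3 ≤ sVal p a3 ∨ sVal p a3 + 3 ≤ sVal p a1) ∧
        (sVal p a2 = sVal p a3 ∨ sVal p a2 + 3 ≤ sVal p a3 ∨ sVal p a3 + 3 ≤ sVal p a2) :=
    ⟨(p : ℤ) ^ 2, hq, sval_bounds p hp5 ha1, sval_bounds p hp5 ha2, sval_bounds p hp5 ha3,
      sval_A p hp hp5 ha1 ha2, sval_A p hp hp5 ha1 ha3, sval_A p hp hp5 ha2 ha3⟩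
  omega

set_option maxHeartbeats 2000000 in
lemma pair_rigid (p : ℕ) (hp : p.Prime) (hp5 : 5 ≤ p) {x y z w : ℤ}
    (hx : inT p x) (hy : inT p y) (hz : inT p z) (hw : inT p w)
    (hsum : x + y = z + w) (hne : x + y ≠ 0) :
    (x = z ∧ y = w) ∨ (x = w ∧ y = z) := by
  obtain ⟨a1, ha1, h1⟩ := inT_struct p hx
  obtain ⟨a2, ha2, h2⟩ := inT_struct p hy
  obtain ⟨a3, ha3, h3⟩ := inT_struct p hz
  obtain ⟨a4, ha4, h4⟩ := inT_struct p hw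
  have hq : (25 : ℤ) ≤ (p : ℤ) ^ 2 := by
    have : (5 : ℤ) ≤ p := by exact_mod_cast hp5
    nlinarith
  obtain ⟨q, hq25, hb1, hb2, hb3, hb4, hA12, hA13, hA14, hA23, hA24, hA34, hB1, hB2, hB3⟩ :
      ∃ q : ℤ, 25 ≤ q ∧
        (q ≤ sVal p a1 ∧ sVal p a1 ≤ 2 * q - 3) ∧
        (q ≤ sVal p a2 ∧ sVal p a2 ≤ 2 * q - 3) ∧
        (q ≤ sVal p a3 ∧ sVal p a3 ≤ 2 * q - 3) ∧
        (q ≤ sVal p a4 ∧ sVal p a4 ≤ 2 * q - 3) ∧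
        (sVal p a1 = sVal p a2 ∨ sVal p a1 + 3 ≤ sVal p a2 ∨ sVal p a2 + 3 ≤ sVal p a1) ∧
        (sVal p a1 = sVal p a3 ∨ sVal p a1 + 3 ≤ sVal p a3 ∨ sVal p a3 + 3 ≤ sVal p a1) ∧
        (sVal p a1 = sVal p a4 ∨ sVal p a1 + 3 ≤ sVal p a4 ∨ sVal p a4 + 3 ≤ sVal p a1) ∧
        (sVal p a2 = sVal p a3 ∨ sVal p a2 + 3 ≤ sVal p a3 ∨ sVal p a3 + 3 ≤ sVal p a2) ∧
        (sVal p a2 = sVal p a4 ∨ sVal p a2 + 3 ≤ sVal p a4 ∨ sVal p a4 + 3 ≤ sVal p a2) ∧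
        (sVal p a3 = sVal p a4 ∨ sVal p a3 + 3 ≤ sVal p a4 ∨ sVal p a4 + 3 ≤ sVal p a3) ∧
        (sVal p a1 + sVal p a2 = sVal p a3 + sVal p a4 →
          (sVal p a1 = sVal p a3 ∧ sVal p a2 = sVal p a4) ∨
            (sVal p a1 = sVal p a4 ∧ sVal p a2 = sVal p a3)) ∧
        (sVal p a1 + sVal p a3 = sVal p a2 + sVal p a4 →
          (sVal p a1 = sVal p a2 ∧ sVal p a3 = sVal p a4) ∨
            (sVal p a1 = sVal p a4 ∧ sVal p a3 = sVal p a2)) ∧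
        (sVal p a1 + sVal p a4 = sVal p a2 + sVal p a3 →
          (sVal p a1 = sVal p a2 ∧ sVal p a4 = sVal p a3) ∨
            (sVal p a1 = sVal p a3 ∧ sVal p a4 = sVal p a2)) :=
    ⟨(p : ℤ) ^ 2, hq, sval_bounds p hp5 ha1, sval_bounds p hp5 ha2, sval_bounds p hp5 ha3,
      sval_bounds p hp5 ha4,
      sval_A p hp hp5 ha1 ha2, sval_A p hp hp5 ha1 ha3, sval_A p hp hp5 ha1 ha4,
      sval_A p hp hp5 ha2 ha3, sval_A p hp hp5 ha2 ha4, sval_A p hp hp5 ha3 ha4,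
      sval_B p hp hp5 ha1 ha2 ha3 ha4, sval_B p hp hp5 ha1 ha3 ha2 ha4,
      sval_B p hp hp5 ha1 ha4 ha2 ha3⟩
  rcases h1 with h1 | h1 | h1 | h1 <;> rcases h2 with h2 | h2 | h2 | h2 <;>
    rcases h3 with h3 | h3 | h3 | h3 <;> rcases h4 with h4 | h4 | h4 | h4 <;>
    subst h1 h2 h3 h4 <;> omega

lemma set_to_inT (p n : ℕ) {x : ZMod n}
    (hx : x ∈ ((fun x : ℤ => (x : ZMod n)) '' (sSet p : Set ℤ) ∪ {1, -1})) :
    ∃ t : ℤ, inT p t ∧ (t : ZMod n) = x := by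
  simp only [Set.mem_union, Set.mem_image, Set.mem_insert_iff, Set.mem_singleton_iff,
    Finset.mem_coe, sSet, Finset.mem_union, Finset.mem_image, Finset.mem_range] at hx
  rcases hx with ⟨t, ⟨a, ha, rfl⟩ | ⟨a, ha, rfl⟩, rfl⟩ | rfl | rfl
  · exact ⟨_, Or.inr (Or.inr ⟨a, by omega, Or.inl rfl⟩), rfl⟩
  · exact ⟨_, Or.inr (Or.inr ⟨a, by omega, Or.inr rfl⟩), rfl⟩
  · exact ⟨1, Or.inl rfl, by push_cast; ring⟩
  · exact ⟨-1, Or.inr (Or.inl rfl), by push_cast; ring⟩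

lemma adj_lift (p n : ℕ) {g h : ZMod n}
    (hadj : (SimpleGraph.fromRel fun g h : ZMod n =>
      g - h ∈ ((fun x : ℤ => (x : ZMod n)) '' (sSet p : Set ℤ) ∪ {1, -1})).Adj g h) :
    ∃ t : ℤ, inT p t ∧ (t : ZMod n) = g - h := by
  rw [SimpleGraph.fromRel_adj] at hadj
  rcases hadj.2 with h' | h'
  · exact set_to_inT p n h'
  · obtain ⟨t, ht, hc⟩ := set_to_inT p n h'
    refine ⟨-t, ?_, by push_cast [hc]; ring⟩
    rcases ht with rfl | rfl | ⟨a, ha, rfl | rfl⟩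
    · exact Or.inr (Or.inl rfl)
    · exact Or.inl (by ring)
    · exact Or.inr (Or.inr ⟨a, ha, Or.inr rfl⟩)
    · exact Or.inr (Or.inr ⟨a, ha, Or.inl (by ring)⟩)


/-- For a prime `p ≥ 5` and `n ≥ 8p²`, with
`S₁ = {±s_a : 0 ≤ a ≤ (p−1)/2} ∪ {1, −1} ⊆ ℤ_n`, the Cayley graph
`Cay(ℤ_n, S₁)` is triangle-free and `K_{2,4}`-free. -/
theorem stmt_11 (p n : ℕ) (hp : p.Prime) (hp5 : 5 ≤ p) (hn : 8 * p ^ 2 ≤ n) :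
    ((SimpleGraph.fromRel fun g h : ZMod n =>
        g - h ∈ ((fun x : ℤ => (x : ZMod n)) '' (sSet p : Set ℤ) ∪ {1, -1})).CliqueFree 3) ∧
      ¬ hasSubgraphCopy (completeBipartiteGraph (Fin 2) (Fin 4))
        (SimpleGraph.fromRel fun g h : ZMod n =>
          g - h ∈ ((fun x : ℤ => (x : ZMod n)) '' (sSet p : Set ℤ) ∪ {1, -1})) := by
  have hp25 : 25 ≤ p ^ 2 := by
    calc 25 = 5 ^ 2 := by norm_num
    _ ≤ p ^ 2 := Nat.pow_le_pow_left hp5 2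
  haveI : NeZero n := ⟨by omega⟩
  have hnZ : 8 * (p : ℤ) ^ 2 ≤ (n : ℤ) := by exact_mod_cast hn
  have hq : (25 : ℤ) ≤ (p : ℤ) ^ 2 := by exact_mod_cast hp25
  -- lifting lemma
  have castzero : ∀ x : ℤ, (x : ZMod n) = 0 → -(8 * (p : ℤ) ^ 2) < x →
      x < 8 * (p : ℤ) ^ 2 → x = 0 := by
    intro x hx h1 h2
    have hd : (n : ℤ) ∣ x := (ZMod.intCast_zmod_eq_zero_iff_dvd x n).mp hx
    exact Int.eq_zero_of_abs_lt_dvd hd (abs_lt.mpr ⟨by linarith, by linarith⟩)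
  constructor
  · rw [SimpleGraph.cliqueFree_iff]
    constructor
    intro f
    have h01 : _ := f.toHom.map_adj (by decide : (⊤ : SimpleGraph (Fin 3)).Adj 0 1)
    have h12 : _ := f.toHom.map_adj (by decide : (⊤ : SimpleGraph (Fin 3)).Adj 1 2)
    have h20 : _ := f.toHom.map_adj (by decide : (⊤ : SimpleGraph (Fin 3)).Adj 2 0)
    obtain ⟨t1, ht1, hc1⟩ := adj_lift p n h01
    obtain ⟨t2, ht2, hc2⟩ := adj_lift p n h12
    obtain ⟨t3, ht3, hc3⟩ := adj_lift p n h20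
    have hsum : ((t1 + t2 + t3 : ℤ) : ZMod n) = 0 := by
      push_cast
      rw [hc1, hc2, hc3]; ring
    obtain ⟨hb1, hb1'⟩ := inT_bound p hp5 ht1
    obtain ⟨hb2, hb2'⟩ := inT_bound p hp5 ht2
    obtain ⟨hb3, hb3'⟩ := inT_bound p hp5 ht3
    exact no_triple p hp hp5 ht1 ht2 ht3
      (castzero _ hsum (by linarith) (by linarith))
  · rintro ⟨f, hinj, hadj⟩
    have adj : ∀ (i : Fin 2) (j : Fin 4),
        (SimpleGraph.fromRel fun g h : ZMod n =>
          g - h ∈ ((fun x : ℤ => (x : ZMod n)) '' (sSet p : Set ℤ) ∪ {1, -1})).Adj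
          (f (Sum.inl i)) (f (Sum.inr j)) := by
      intro i j
      exact hadj (by simp [completeBipartiteGraph])
    obtain ⟨d0, hd0T, hd0⟩ := adj_lift p n (adj 0 0)
    obtain ⟨d1, hd1T, hd1⟩ := adj_lift p n (adj 0 1)
    obtain ⟨d2, hd2T, hd2⟩ := adj_lift p n (adj 0 2)
    obtain ⟨e0, he0T, he0⟩ := adj_lift p n ((adj 1 0))
    obtain ⟨e1, he1T, he1⟩ := adj_lift p n ((adj 1 1))
    obtain ⟨e2, he2T, he2⟩ := adj_lift p n ((adj 1 2))
    obtain ⟨bd0, bd0'⟩ := inT_bound p hp5 hd0T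
    obtain ⟨bd1, bd1'⟩ := inT_bound p hp5 hd1T
    obtain ⟨bd2, bd2'⟩ := inT_bound p hp5 hd2T
    obtain ⟨be0, be0'⟩ := inT_bound p hp5 he0T
    obtain ⟨be1, be1'⟩ := inT_bound p hp5 he1T
    obtain ⟨be2, be2'⟩ := inT_bound p hp5 he2T
    -- all differences d_j - e_j are equal as integers
    have eq01 : d0 - e0 = d1 - e1 := by
      have h : ((d0 - e0 - (d1 - e1) : ℤ) : ZMod n) = 0 := by
        push_cast; rw [hd0, he0, hd1, he1]; ring
      have := castzero _ h (by linarith) (by linarith)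
      linarith
    have eq02 : d0 - e0 = d2 - e2 := by
      have h : ((d0 - e0 - (d2 - e2) : ℤ) : ZMod n) = 0 := by
        push_cast; rw [hd0, he0, hd2, he2]; ring
      have := castzero _ h (by linarith) (by linarith)
      linarith
    have hne : d0 - e0 ≠ 0 := by
      intro h0
      have h1 : f (Sum.inl 0) - f (Sum.inl 1) = ((d0 - e0 : ℤ) : ZMod n) := by
        push_cast; rw [hd0, he0]; ring
      rw [h0] at h1
      rw [Int.cast_zero, sub_eq_zero] at h1
      have := hinj h1
      simp at this
    have hd_ne : ∀ (dj dk : ℤ) (j k : Fin 4), j ≠ k →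
        ((dj : ZMod n)) = f (Sum.inl 0) - f (Sum.inr j) →
        ((dk : ZMod n)) = f (Sum.inl 0) - f (Sum.inr k) → dj ≠ dk := by
      intro dj dk j k hjk hj hk h
      subst h
      rw [hj] at hk
      have := hinj (sub_right_injective hk)
      simp only [Sum.inr.injEq] at this
      exact hjk this
    have hne01 : d0 ≠ d1 := hd_ne d0 d1 0 1 (by decide) hd0 hd1
    have hne02 : d0 ≠ d2 := hd_ne d0 d2 0 2 (by decide) hd0 hd2
    have hne12 : d1 ≠ d2 := hd_ne d1 d2 1 2 (by decide) hd1 hd2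
    have r1 := pair_rigid p hp hp5 hd1T (inT_neg p he1T) hd0T (inT_neg p he0T)
      (by linarith) (by intro h'; exact hne (by linarith))
    have r2 := pair_rigid p hp hp5 hd2T (inT_neg p he2T) hd0T (inT_neg p he0T)
      (by linarith) (by intro h'; exact hne (by linarith))
    rcases r1 with ⟨h', -⟩ | ⟨hA1, -⟩
    · exact hne01 h'.symm
    rcases r2 with ⟨h', -⟩ | ⟨hA2, -⟩
    · exact hne02 h'.symm
    exact hne12 (hA1.trans hA2.symm)
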